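/- For any two distinct non-adjacent vertices [α] and [β] of the symplectic graph Sp(2ν,q), the number of vertices adjacent to both [α] and [β] is exactly q^{2ν-2}(q-1). -/

import Mathlib

open Matrix

/-- The standard nonsingular alternate matrix over `F` with `ν` diagonal blocks
`[[0,1],[-1,0]]`. -/
def sK (F : Type) [Field F] (ν : ℕ) : Matrix (Fin (2 * ν)) (Fin (2 * ν)) F :=
  Matrix.of fun i j =>
    if i.val % 2 = 0 ∧ j.val = i.val + 1 then (1 : F)
    else if j.val % 2 = 0 ∧ i.val = j.val + 1 then (-1 : F) else 0

/-- The symplectic graph `Sp(2ν, q)`: vertices are the one-dimensional subspaces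
of `F^(2ν)`, with `[α]` adjacent to `[β]` iff `α K βᵀ ≠ 0`. -/
def SpG (F : Type) [Field F] (ν : ℕ) :
    SimpleGraph (Projectivization F (Fin (2 * ν) → F)) :=
  SimpleGraph.fromRel fun x y => x.rep ⬝ᵥ ((sK F ν) *ᵥ y.rep) ≠ 0

section Aux

variable {F : Type} [Field F] {ν : ℕ}

/-- The "upper half" of `sK`. -/
private def sK1 (F : Type) [Field F] (ν : ℕ) : Matrix (Fin (2 * ν)) (Fin (2 * ν)) F :=
  Matrix.of fun i j => if i.val % 2 = 0 ∧ j.val = i.val + 1 then (1 : F) else 0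

private lemma sK_eq : sK F ν = sK1 F ν - (sK1 F ν)ᵀ := by
  ext i j
  simp only [sK, sK1, Matrix.sub_apply, Matrix.transpose_apply, Matrix.of_apply]
  split_ifs <;> first | omega | ring

private lemma dot_transpose (M : Matrix (Fin (2 * ν)) (Fin (2 * ν)) F)
    (u w : Fin (2 * ν) → F) : u ⬝ᵥ (Mᵀ *ᵥ w) = w ⬝ᵥ (M *ᵥ u) := by
  rw [Matrix.dotProduct_mulVec, Matrix.vecMul_transpose, dotProduct_comm]

private lemma sK_skew (u w : Fin (2 * ν) → F) :
    u ⬝ᵥ (sK F ν *ᵥ w) = -(w ⬝ᵥ (sK F ν *ᵥ u)) := by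
  rw [sK_eq, Matrix.sub_mulVec, Matrix.sub_mulVec, dotProduct_sub, dotProduct_sub,
    dot_transpose, dot_transpose]
  ring

private lemma sK_alt (u : Fin (2 * ν) → F) : u ⬝ᵥ (sK F ν *ᵥ u) = 0 := by
  rw [sK_eq, Matrix.sub_mulVec, dotProduct_sub, dot_transpose, sub_self]

private lemma sK_mulVec_eq_zero {v : Fin (2 * ν) → F} (h : sK F ν *ᵥ v = 0) :
    v = 0 := by
  funext j
  have hjv := j.isLt
  rcases Nat.even_or_odd j.val with hj | hj
  · -- use the odd row j+1
    have hj' : j.val % 2 = 0 := Nat.even_iff.mp hj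
    have hjlt : j.val + 1 < 2 * ν := by omega
    have hi := congrFun h ⟨j.val + 1, hjlt⟩
    have hsum : ∑ k, sK F ν ⟨j.val + 1, hjlt⟩ k * v k
        = sK F ν ⟨j.val + 1, hjlt⟩ j * v j := by
      refine Finset.sum_eq_single_of_mem j (Finset.mem_univ _) (fun k _ hk => ?_)
      have hkj : k.val ≠ j.val := fun hh => hk (Fin.ext hh)
      have : sK F ν ⟨j.val + 1, hjlt⟩ k = 0 := by
        simp only [sK, Matrix.of_apply]
        rw [if_neg (by simp only [not_and]; omega), if_neg (by simp only [not_and]; omega)]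
      rw [this, zero_mul]
    have hval : sK F ν ⟨j.val + 1, hjlt⟩ j = -1 := by
      simp only [sK, Matrix.of_apply]
      rw [if_neg (by simp only [not_and]; omega), if_pos ⟨hj', by trivial⟩]
    have hrow : (sK F ν *ᵥ v) ⟨j.val + 1, hjlt⟩ = -1 * v j := by
      rw [show (sK F ν *ᵥ v) ⟨j.val + 1, hjlt⟩ = ∑ k, sK F ν ⟨j.val + 1, hjlt⟩ k * v k
          from rfl, hsum, hval]
    rw [hrow] at hi
    have : -1 * v j = 0 := hi
    simpa using this
  · -- use the even row j-1
    have hj' : j.val % 2 = 1 := Nat.odd_iff.mp hj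
    have hjlt : j.val - 1 < 2 * ν := by omega
    have hi := congrFun h ⟨j.val - 1, hjlt⟩
    have hsum : ∑ k, sK F ν ⟨j.val - 1, hjlt⟩ k * v k
        = sK F ν ⟨j.val - 1, hjlt⟩ j * v j := by
      refine Finset.sum_eq_single_of_mem j (Finset.mem_univ _) (fun k _ hk => ?_)
      have hkj : k.val ≠ j.val := fun hh => hk (Fin.ext hh)
      have : sK F ν ⟨j.val - 1, hjlt⟩ k = 0 := by
        simp only [sK, Matrix.of_apply]
        rw [if_neg (by simp only [not_and]; omega), if_neg (by simp only [not_and]; omega)]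
      rw [this, zero_mul]
    have hval : sK F ν ⟨j.val - 1, hjlt⟩ j = 1 := by
      simp only [sK, Matrix.of_apply]
      rw [if_pos ⟨by omega, by omega⟩]
    have hrow : (sK F ν *ᵥ v) ⟨j.val - 1, hjlt⟩ = 1 * v j := by
      rw [show (sK F ν *ᵥ v) ⟨j.val - 1, hjlt⟩ = ∑ k, sK F ν ⟨j.val - 1, hjlt⟩ k * v k
          from rfl, hsum, hval]
    rw [hrow] at hi
    have : 1 * v j = 0 := hi
    simpa using this

private lemma sK_mulVec_injective :
    Function.Injective (fun v : Fin (2 * ν) → F => sK F ν *ᵥ v) := by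
  intro u w h
  have : sK F ν *ᵥ (u - w) = 0 := by
    rw [Matrix.mulVec_sub]
    simpa [sub_eq_zero] using h
  have := sK_mulVec_eq_zero this
  rwa [sub_eq_zero] at this

/-- Adjacency in the symplectic graph, in convenient form. -/
private lemma spg_adj_iff (x z : Projectivization F (Fin (2 * ν) → F)) :
    (SpG F ν).Adj x z ↔ z.rep ⬝ᵥ (sK F ν *ᵥ x.rep) ≠ 0 := by
  rw [SpG, SimpleGraph.fromRel_adj]
  constructor
  · rintro ⟨hne, h | h⟩
    · rw [sK_skew]
      simpa using h
    · exact h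
  · intro h
    refine ⟨?_, Or.inr h⟩
    rintro rfl
    exact h (sK_alt _)

/-- Two distinct projective points have "linearly independent" representatives. -/
private lemma rep_combo {x y : Projectivization F (Fin (2 * ν) → F)} (hne : x ≠ y)
    {a b : F} (h : a • x.rep + b • y.rep = 0) : a = 0 ∧ b = 0 := by
  have hx0 := x.rep_nonzero
  have hy0 := y.rep_nonzero
  have ha : a = 0 := by
    by_contra ha
    have h1 : a • x.rep = -(b • y.rep) := eq_neg_of_add_eq_zero_left h
    have hxy : x.rep = (-(a⁻¹ * b)) • y.rep := by
      calc x.rep = a⁻¹ • (a • x.rep) := by rw [smul_smul, inv_mul_cancel₀ ha, one_smul]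
        _ = (-(a⁻¹ * b)) • y.rep := by rw [h1, smul_neg, smul_smul, neg_smul]
    have hc : (-(a⁻¹ * b)) ≠ 0 := by
      intro h0
      rw [h0, zero_smul] at hxy
      exact hx0 hxy
    have : Projectivization.mk F x.rep hx0 = Projectivization.mk F y.rep hy0 := by
      rw [Projectivization.mk_eq_mk_iff']
      exact ⟨-(a⁻¹ * b), hxy.symm⟩
    rw [Projectivization.mk_rep, Projectivization.mk_rep] at this
    exact hne this
  refine ⟨ha, ?_⟩
  rw [ha, zero_smul, zero_add] at h
  exact (smul_eq_zero.mp h).resolve_right hy0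

/-- Generic fiberwise counting lemma. -/
private lemma card_filter_eq_mul {A B : Type*} [Fintype A] [DecidableEq B]
    (f : A → B) (S : Finset B) (p : A → Prop) [DecidablePred p]
    (hmem : ∀ a, p a → f a ∈ S) (k : ℕ)
    (hfib : ∀ b ∈ S, (Finset.univ.filter (fun a => p a ∧ f a = b)).card = k) :
    (Finset.univ.filter p).card = S.card * k := by
  rw [Finset.card_eq_sum_card_fiberwise
    (f := f) (t := S) (fun a ha => hmem a (Finset.mem_filter.mp ha).2)]
  rw [Finset.sum_congr rfl (fun b hb => ?_), Finset.sum_const, smul_eq_mul]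
  rw [Finset.filter_filter]
  exact hfib b hb

end Aux

theorem common_neighbors_nonadj_SpG (q ν : ℕ) (F : Type) [Field F] [Fintype F]
    (hF : Fintype.card F = q) (hν : 1 ≤ ν)
    (x y : Projectivization F (Fin (2 * ν) → F)) (hne : x ≠ y)
    (hxy : ¬ (SpG F ν).Adj x y) :
    ((SpG F ν).neighborSet x ∩ (SpG F ν).neighborSet y).ncard
      = q ^ (2 * ν - 2) * (q - 1) := by
  classical
  subst hF
  haveI : Finite (Projectivization F (Fin (2 * ν) → F)) := Quotient.finite _
  haveI : Fintype (Projectivization F (Fin (2 * ν) → F)) := Fintype.ofFinite _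
  -- setup
  set w₁ : Fin (2 * ν) → F := sK F ν *ᵥ x.rep with hw₁
  set w₂ : Fin (2 * ν) → F := sK F ν *ᵥ y.rep with hw₂
  set M : Matrix (Fin 2) (Fin (2 * ν)) F := Matrix.of ![w₁, w₂] with hM
  set ψ := M.mulVecLin with hψ
  have hψ0 : ∀ v, ψ v 0 = v ⬝ᵥ w₁ := fun v => by
    show (M 0) ⬝ᵥ v = v ⬝ᵥ w₁
    rw [show M 0 = w₁ from rfl, dotProduct_comm]
  have hψ1 : ∀ v, ψ v 1 = v ⬝ᵥ w₂ := fun v => by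
    show (M 1) ⬝ᵥ v = v ⬝ᵥ w₂
    rw [show M 1 = w₂ from rfl, dotProduct_comm]
  -- the target set as a finset
  set S : Finset (Projectivization F (Fin (2 * ν) → F)) :=
    Finset.univ.filter
      (fun z => z ∈ (SpG F ν).neighborSet x ∩ (SpG F ν).neighborSet y) with hS
  have hset : (SpG F ν).neighborSet x ∩ (SpG F ν).neighborSet y = ↑S := by
    ext z; simp [hS]
  rw [hset, Set.ncard_coe_finset]
  -- membership in S in terms of dot products
  have hSmem : ∀ z, z ∈ S ↔ (z.rep ⬝ᵥ w₁ ≠ 0 ∧ z.rep ⬝ᵥ w₂ ≠ 0) := by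
    intro z
    simp only [hS, Finset.mem_filter, Finset.mem_univ, true_and, Set.mem_inter_iff,
      SimpleGraph.mem_neighborSet, spg_adj_iff]
    exact Iff.rfl
  -- q ≥ 2
  have hq2 : 2 ≤ Fintype.card F := Fintype.one_lt_card
  -- ψ is surjective
  have hψsurj : Function.Surjective ψ := by
    have hrows : LinearIndependent F (fun i : Fin 2 => M i) := by
      have : (fun i : Fin 2 => M i) = ![w₁, w₂] := by
        funext i; fin_cases i <;> rfl
      rw [this, linearIndependent_fin2]
      constructor
      · simp only [Matrix.cons_val_one, Matrix.head_cons]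
        intro h0
        have : sK F ν *ᵥ y.rep = sK F ν *ᵥ (0 : Fin (2 * ν) → F) := by
          rw [Matrix.mulVec_zero]; exact h0
        exact y.rep_nonzero (sK_mulVec_injective this)
      · intro a ha
        simp only [Matrix.cons_val_one, Matrix.head_cons, Matrix.cons_val_zero] at ha
        have : sK F ν *ᵥ (a • y.rep) = sK F ν *ᵥ x.rep := by
          rw [Matrix.mulVec_smul]; exact ha
        have hax := sK_mulVec_injective this
        have : (1 : F) • x.rep + (-a) • y.rep = 0 := by
          rw [one_smul, neg_smul, ← hax, add_neg_cancel]
        exact one_ne_zero (rep_combo hne this).1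
    have hinj : Function.Injective (Mᵀ.mulVecLin) := by
      rw [Matrix.mulVecLin_transpose, Matrix.coe_vecMulLinear]
      exact Matrix.vecMul_injective_iff.mpr hrows
    have hrankT : Mᵀ.rank = 2 := by
      rw [Matrix.rank]
      rw [LinearMap.finrank_range_of_inj hinj]
      simp [Module.finrank_pi]
    have hrank : M.rank = 2 := by rw [← Matrix.rank_transpose, hrankT]
    have hrange : LinearMap.range ψ = ⊤ := by
      apply Submodule.eq_top_of_finrank_eq
      rw [show Module.finrank F (LinearMap.range ψ) = M.rank from rfl, hrank]
      simp [Module.finrank_pi]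
    exact LinearMap.range_eq_top.mp hrange
  -- fibers of ψ have cardinality Fintype.card F ^ (2 * ν - 2)
  have hker : Fintype.card (LinearMap.ker ψ) = Fintype.card F ^ (2 * ν - 2) := by
    have hfr : Module.finrank F (LinearMap.ker ψ) = 2 * ν - 2 := by
      have h1 := LinearMap.finrank_range_add_finrank_ker ψ
      rw [LinearMap.range_eq_top.mpr hψsurj] at h1
      have h2 : Module.finrank F (⊤ : Submodule F (Fin 2 → F)) = 2 := by
        simp [Module.finrank_pi]
      have h3 : Module.finrank F (Fin (2 * ν) → F) = 2 * ν := by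
        simp [Module.finrank_pi]
      rw [h2, h3] at h1
      omega
    rw [Module.card_eq_pow_finrank (K := F), hfr]
  have hfiber : ∀ b : Fin 2 → F,
      (Finset.univ.filter (fun v : Fin (2 * ν) → F => ψ v = b)).card = Fintype.card F ^ (2 * ν - 2) := by
    intro b
    obtain ⟨v₀, hv₀⟩ := hψsurj b
    have e : LinearMap.ker ψ ≃ {v : Fin (2 * ν) → F // ψ v = b} :=
      { toFun := fun k => ⟨k.1 + v₀, by
          rw [map_add, LinearMap.mem_ker.mp k.2, hv₀, zero_add]⟩
        invFun := fun v => ⟨v.1 - v₀, by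
          rw [LinearMap.mem_ker, map_sub, v.2, hv₀, sub_self]⟩
        left_inv := fun k => by ext; simp
        right_inv := fun v => by ext; simp }
    rw [← Fintype.card_subtype, ← Fintype.card_congr e, hker]
  -- the "doubly nonzero" finset in F²
  set U : Finset (Fin 2 → F) :=
    Finset.univ.filter (fun u => u 0 ≠ 0 ∧ u 1 ≠ 0) with hU
  have hUcard : U.card = (Fintype.card F - 1) * (Fintype.card F - 1) := by
    have e : {u : Fin 2 → F // u 0 ≠ 0 ∧ u 1 ≠ 0} ≃ {a : F // a ≠ 0} × {a : F // a ≠ 0} :=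
      { toFun := fun u => (⟨u.1 0, u.2.1⟩, ⟨u.1 1, u.2.2⟩)
        invFun := fun p => ⟨![p.1.1, p.2.1], by simp [p.1.2, p.2.2]⟩
        left_inv := fun u => by
          ext i
          fin_cases i <;> simp
        right_inv := fun p => by simp }
    have hne0 : Fintype.card {a : F // a ≠ 0} = Fintype.card F - 1 := by
      rw [Fintype.card_subtype_compl (p := fun a : F => a = 0), Fintype.card_subtype_eq]
    rw [hU, ← Fintype.card_subtype, Fintype.card_congr e, Fintype.card_prod, hne0]
  -- the vector-level double count
  set p : (Fin (2 * ν) → F) → Prop := fun v => v ⬝ᵥ w₁ ≠ 0 ∧ v ⬝ᵥ w₂ ≠ 0 with hp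
  have hTU : (Finset.univ.filter p).card = U.card * Fintype.card F ^ (2 * ν - 2) := by
    refine card_filter_eq_mul ψ U p ?_ _ ?_
    · intro v hv
      simp only [hU, Finset.mem_filter, Finset.mem_univ, true_and, hψ0, hψ1]
      exact hv
    · intro b hb
      simp only [hU, Finset.mem_filter, Finset.mem_univ, true_and] at hb
      have : (Finset.univ.filter (fun v : Fin (2 * ν) → F => p v ∧ ψ v = b))
          = Finset.univ.filter (fun v : Fin (2 * ν) → F => ψ v = b) := by
        refine Finset.filter_congr (fun v _ => ?_)
        constructor
        · exact fun h => h.2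
        · intro h
          refine ⟨⟨?_, ?_⟩, h⟩
          · rw [← hψ0, h]; exact hb.1
          · rw [← hψ1, h]; exact hb.2
      rw [this, hfiber]
  -- the projective double count
  have hTS : (Finset.univ.filter p).card = S.card * (Fintype.card F - 1) := by
    set f : (Fin (2 * ν) → F) → Projectivization F (Fin (2 * ν) → F) :=
      fun v => if h : v = 0 then x else Projectivization.mk F v h with hf
    refine card_filter_eq_mul f S p ?_ _ ?_
    · intro v hv
      have hv0 : v ≠ 0 := by
        intro h0
        rw [h0] at hv
        exact hv.1 (zero_dotProduct _)
      rw [hSmem]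
      obtain ⟨a, harep⟩ := Projectivization.exists_smul_eq_mk_rep F v hv0
      have hfv : f v = Projectivization.mk F v hv0 := by rw [hf]; simp [hv0]
      rw [hfv, ← harep]
      constructor
      · rw [smul_dotProduct]
        exact mul_ne_zero (Units.ne_zero a) hv.1
      · rw [smul_dotProduct]
        exact mul_ne_zero (Units.ne_zero a) hv.2
    · intro z hz
      rw [hSmem] at hz
      have hkey : Finset.univ.filter (fun v : Fin (2 * ν) → F => p v ∧ f v = z)
          = (Finset.univ.filter (fun c : F => c ≠ 0)).image (fun c => c • z.rep) := by
        ext v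
        simp only [Finset.mem_filter, Finset.mem_univ, true_and, Finset.mem_image]
        constructor
        · rintro ⟨hpv, hfv⟩
          have hv0 : v ≠ 0 := by
            intro h0; rw [h0] at hpv; exact hpv.1 (zero_dotProduct _)
          simp only [hf] at hfv
          rw [dif_neg hv0] at hfv
          have : Projectivization.mk F v hv0 = Projectivization.mk F z.rep z.rep_nonzero := by
            rw [hfv, Projectivization.mk_rep]
          obtain ⟨a, ha⟩ := (Projectivization.mk_eq_mk_iff F v z.rep hv0 z.rep_nonzero).mp this
          exact ⟨(a : F), Units.ne_zero a, ha⟩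
        · rintro ⟨c, hc, rfl⟩
          have hv0 : c • z.rep ≠ 0 := smul_ne_zero hc z.rep_nonzero
          refine ⟨⟨?_, ?_⟩, ?_⟩
          · rw [smul_dotProduct]; exact mul_ne_zero hc hz.1
          · rw [smul_dotProduct]; exact mul_ne_zero hc hz.2
          · rw [hf]
            show (if h : c • z.rep = 0 then x else Projectivization.mk F (c • z.rep) h) = z
            rw [dif_neg hv0]
            have : Projectivization.mk F (c • z.rep) hv0
                = Projectivization.mk F z.rep z.rep_nonzero := by
              rw [Projectivization.mk_eq_mk_iff']
              exact ⟨c, rfl⟩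
            rw [this, Projectivization.mk_rep]
      rw [hkey]
      rw [Finset.card_image_of_injOn (fun c₁ h₁ c₂ h₂ hcc => ?_)]
      · rw [show Finset.univ.filter (fun c : F => c ≠ 0) = Finset.univ.erase 0 by
          ext c; simp [Finset.mem_erase, and_comm]]
        rw [Finset.card_erase_of_mem (Finset.mem_univ _), Finset.card_univ]
      · have h0 : (c₁ - c₂) • z.rep = 0 := by rw [sub_smul, hcc, sub_self]
        have h1 := (smul_eq_zero.mp h0).resolve_right z.rep_nonzero
        exact sub_eq_zero.mp h1
  -- combine
  have hfinal : S.card * (Fintype.card F - 1) = (Fintype.card F ^ (2 * ν - 2) * (Fintype.card F - 1)) * (Fintype.card F - 1) := by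
    rw [← hTS, hTU, hUcard]; ring
  have hq1 : 0 < Fintype.card F - 1 := by omega
  exact Nat.eq_of_mul_eq_mul_right hq1 hfinal
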